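/- Suppose θ(t) = (a(t), w(t), b(t)) is a differentiable curve in ℝ × ℝ^d × ℝ satisfying ȧ = σ(wᵀx+b)·c, ẇ = a·σ'(wᵀx+b)·x·c, ḃ = a·σ'(wᵀx+b)·c for a fixed x ∈ ℝ^d and scalar c, where σ(z)=max(z,0), σ'(z)=1_{z>0}. Then the Minkowski quantity -a² + |w|² + b² is constant along the curve. -/

import Mathlib

/-- Along the (formal) single-neuron gradient flow
`ȧ = σ(wᵀx+b)·c`, `ẇ = a·σ'(wᵀx+b)·c·x`, `ḃ = a·σ'(wᵀx+b)·c`,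
where `σ = ReLU` and `σ'(z) = 1_{z>0}`, the Minkowski quantity
`-a² + |w|² + b²` is constant. -/
theorem minkowski_invariant (d : ℕ) (x : EuclideanSpace ℝ (Fin d)) (c : ℝ)
    (a : ℝ → ℝ) (w : ℝ → EuclideanSpace ℝ (Fin d)) (b : ℝ → ℝ)
    (ha : ∀ t, HasDerivAt a (max (inner ℝ (w t) x + b t) 0 * c) t)
    (hw : ∀ t, HasDerivAt w
      ((a t * (if 0 < inner ℝ (w t) x + b t then (1 : ℝ) else 0) * c) • x) t)
    (hb : ∀ t, HasDerivAt b
      (a t * (if 0 < inner ℝ (w t) x + b t then (1 : ℝ) else 0) * c) t) :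
    ∀ s t : ℝ, -(a s) ^ 2 + ‖w s‖ ^ 2 + (b s) ^ 2
      = -(a t) ^ 2 + ‖w t‖ ^ 2 + (b t) ^ 2 := by
  set F : ℝ → ℝ := fun t => -(a t) ^ 2 + ‖w t‖ ^ 2 + (b t) ^ 2 with hF
  have key : ∀ t, HasDerivAt F 0 t := by
    intro t
    set z : ℝ := inner ℝ (w t) x + b t with hz
    set ind : ℝ := if 0 < z then (1 : ℝ) else 0 with hind
    have hinner : HasDerivAt (fun t => (inner ℝ (w t) (w t) : ℝ))
        (inner ℝ (w t) ((a t * ind * c) • x) + inner ℝ ((a t * ind * c) • x) (w t)) t := by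
      have h := (hw t).inner ℝ (hw t)
      convert h using 2
    have hnorm : HasDerivAt (fun t => ‖w t‖ ^ 2)
        (2 * (a t * ind * c * inner ℝ (w t) x)) t := by
      have : (fun t => ‖w t‖ ^ 2) = fun t => (inner ℝ (w t) (w t) : ℝ) := by
        funext u; rw [real_inner_self_eq_norm_sq]
      rw [this]
      convert hinner using 1
      rw [real_inner_smul_left, real_inner_smul_right, real_inner_comm]
      ring
    have hD : HasDerivAt F
        (-(2 * a t * (max z 0 * c)) + 2 * (a t * ind * c * inner ℝ (w t) x)
          + 2 * b t * (a t * ind * c)) t := by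
      have h1 : HasDerivAt (fun t => -(a t) ^ 2) (-(2 * a t * (max z 0 * c))) t := by
        have := ((ha t).fun_pow 2).neg
        exact this.congr_deriv (by rw [hz]; push_cast; ring)
      have h3 : HasDerivAt (fun t => (b t) ^ 2) (2 * b t * (a t * ind * c)) t := by
        have := (hb t).fun_pow 2
        exact this.congr_deriv (by rw [hind, hz]; push_cast; ring)
      exact (h1.add hnorm).add h3
    convert hD using 1
    have hiz : ind * z = max z 0 := by
      rw [hind]; rcases lt_or_ge 0 z with h | h
      · simp [h, max_eq_left h.le]
      · simp [not_lt.mpr h, max_eq_right h]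
    have : a t * c * (ind * z) = a t * c * max z 0 := by rw [hiz]
    rw [hz] at this
    nlinarith [this]
  intro s t
  have := fun u => (key u).deriv
  have hc : F s = F t := by
    have hdiff : Differentiable ℝ F := fun u => (key u).differentiableAt
    have := is_const_of_deriv_eq_zero hdiff (fun u => (key u).deriv) s t
    exact this
  exact hc
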